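/- Let G be a simple graph and let uv be an edge of G. Let G' be obtained from G by replacing the edge uv with a path of length 3 (adding two new vertices w, w', deleting uv, and adding edges uw, ww', w'v). Then the maximum size of an independent set in G' equals the maximum size of an independent set in G plus 1. -/

import Mathlib

/-- The independence number of a graph, as the supremum of sizes of independent sets. -/
noncomputable def myIndepNum {V : Type*} (G : SimpleGraph V) : ℕ :=
  sSup {n : ℕ | ∃ s : Finset V, s.card = n ∧
    ∀ a ∈ s, ∀ b ∈ s, a ≠ b → ¬ G.Adj a b}

/-- Doubly subdividing an edge `uv` of a finite simple graph `G`
(replacing `uv` by the path `u–w–w'–v` with two fresh vertices `w := inr 0`, `w' := inr 1`)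
increases the independence number by exactly one. -/
theorem double_subdivision_indepNum {V : Type*} [Fintype V]
    (G : SimpleGraph V) (u v : V) (huv : G.Adj u v)
    (G' : SimpleGraph (V ⊕ Fin 2))
    (hG' : ∀ x y : V ⊕ Fin 2, G'.Adj x y ↔
      ((∃ a b : V, x = Sum.inl a ∧ y = Sum.inl b ∧ G.Adj a b ∧
          ¬((a = u ∧ b = v) ∨ (a = v ∧ b = u))) ∨
       (x = Sum.inl u ∧ y = Sum.inr 0) ∨ (x = Sum.inr 0 ∧ y = Sum.inl u) ∨
       (x = Sum.inr 0 ∧ y = Sum.inr 1) ∨ (x = Sum.inr 1 ∧ y = Sum.inr 0) ∨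
       (x = Sum.inr 1 ∧ y = Sum.inl v) ∨ (x = Sum.inl v ∧ y = Sum.inr 1))) :
    myIndepNum G' = myIndepNum G + 1 := by
  classical
  have hne : u ≠ v := G.ne_of_adj huv
  unfold myIndepNum
  set B : Set ℕ := {n : ℕ | ∃ s : Finset V, s.card = n ∧
    ∀ a ∈ s, ∀ b ∈ s, a ≠ b → ¬ G.Adj a b} with hBdef
  set A : Set ℕ := {n : ℕ | ∃ s : Finset (V ⊕ Fin 2), s.card = n ∧
    ∀ a ∈ s, ∀ b ∈ s, a ≠ b → ¬ G'.Adj a b} with hAdef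
  have hBne : B.Nonempty := ⟨0, ∅, by simp, by simp⟩
  have hAne : A.Nonempty := ⟨0, ∅, by simp, by simp⟩
  have hBbdd : BddAbove B := by
    refine ⟨Fintype.card V, ?_⟩
    rintro n ⟨s, rfl, -⟩
    exact s.card_le_univ
  have hAbdd : BddAbove A := by
    refine ⟨Fintype.card (V ⊕ Fin 2), ?_⟩
    rintro n ⟨s, rfl, -⟩
    exact s.card_le_univ
  obtain ⟨s, hscard, hsind⟩ := Nat.sSup_mem hBne hBbdd
  refine le_antisymm ?_ ?_
  · -- sSup A ≤ sSup B + 1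
    refine csSup_le hAne ?_
    rintro n ⟨t, rfl, htind⟩
    set s0 : Finset V := t.preimage Sum.inl (Sum.inl_injective.injOn) with hs0def
    have hmem0 : ∀ a : V, a ∈ s0 ↔ Sum.inl a ∈ t := fun a => Finset.mem_preimage
    have hfl : t.filter (fun x => x.isLeft) = s0.image Sum.inl := by
      ext x
      cases x with
      | inl a => simp [hmem0, Sum.inl_injective.eq_iff]
      | inr i => simp
    have hflcard : (t.filter (fun x => x.isLeft)).card = s0.card := by
      rw [hfl, Finset.card_image_of_injective _ Sum.inl_injective]
    have hsplit : (t.filter (fun x => x.isLeft)).card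
        + (t.filter (fun x => ¬ x.isLeft)).card = t.card :=
      Finset.card_filter_add_card_filter_not _
    by_cases hcase : Sum.inl u ∈ t ∧ Sum.inl v ∈ t
    · -- both endpoints in t; then no subdivision vertex in t
      obtain ⟨htu, htv⟩ := hcase
      have h0 : (Sum.inr 0 : V ⊕ Fin 2) ∉ t := by
        intro h
        exact htind _ h _ htu (by simp) ((hG' _ _).mpr (by tauto))
      have h1 : (Sum.inr 1 : V ⊕ Fin 2) ∉ t := by
        intro h
        exact htind _ h _ htv (by simp) ((hG' _ _).mpr (by tauto))
      have hright : t.filter (fun x => ¬ x.isLeft) = ∅ := by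
        ext x
        simp only [Finset.mem_filter, Finset.notMem_empty, iff_false, not_and]
        intro hx
        cases x with
        | inl a => simp
        | inr i =>
          exfalso
          have : i = 0 ∨ i = 1 := by omega
          rcases this with rfl | rfl
          · exact h0 hx
          · exact h1 hx
      have htcard : t.card = s0.card := by
        rw [← hsplit, hright]; simp [hflcard]
      have hvs0 : v ∈ s0 := (hmem0 v).mpr htv
      have hind : ∀ a ∈ s0.erase v, ∀ b ∈ s0.erase v, a ≠ b → ¬ G.Adj a b := by
        intro a ha b hb hab hadj
        have hav : a ≠ v := Finset.ne_of_mem_erase ha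
        have hbv : b ≠ v := Finset.ne_of_mem_erase hb
        refine htind _ ((hmem0 a).mp (Finset.mem_of_mem_erase ha)) _
          ((hmem0 b).mp (Finset.mem_of_mem_erase hb)) (by simp [hab])
          ((hG' _ _).mpr (Or.inl ⟨a, b, rfl, rfl, hadj, ?_⟩))
        rintro (⟨rfl, rfl⟩ | ⟨rfl, rfl⟩)
        · exact hbv rfl
        · exact hav rfl
      have hle : (s0.erase v).card ≤ sSup B :=
        le_csSup hBbdd ⟨s0.erase v, rfl, hind⟩
      have hcd := Finset.card_erase_of_mem hvs0
      have hpos : 0 < s0.card := Finset.card_pos.mpr ⟨v, hvs0⟩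
      omega
    · -- at most one endpoint in t; s0 is independent in G
      have hind : ∀ a ∈ s0, ∀ b ∈ s0, a ≠ b → ¬ G.Adj a b := by
        intro a ha b hb hab hadj
        refine htind _ ((hmem0 a).mp ha) _ ((hmem0 b).mp hb) (by simp [hab])
          ((hG' _ _).mpr (Or.inl ⟨a, b, rfl, rfl, hadj, ?_⟩))
        rintro (⟨rfl, rfl⟩ | ⟨rfl, rfl⟩)
        · exact hcase ⟨(hmem0 _).mp ha, (hmem0 _).mp hb⟩
        · exact hcase ⟨(hmem0 _).mp hb, (hmem0 _).mp ha⟩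
      have hle : s0.card ≤ sSup B := le_csSup hBbdd ⟨s0, rfl, hind⟩
      have hr1 : (t.filter (fun x => ¬ x.isLeft)).card ≤ 1 := by
        refine Finset.card_le_one.mpr ?_
        intro x hx y hy
        obtain ⟨hxt, hxr⟩ := Finset.mem_filter.mp hx
        obtain ⟨hyt, hyr⟩ := Finset.mem_filter.mp hy
        by_contra hxy
        cases x with
        | inl a => simp at hxr
        | inr i =>
          cases y with
          | inl b => simp at hyr
          | inr j =>
            have hij : i ≠ j := fun h => hxy (by rw [h])
            have hi : i = 0 ∨ i = 1 := by omega
            have hj : j = 0 ∨ j = 1 := by omega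
            rcases hi with rfl | rfl <;> rcases hj with rfl | rfl
            · exact hij rfl
            · exact htind _ hxt _ hyt hxy ((hG' _ _).mpr (by tauto))
            · exact htind _ hxt _ hyt hxy ((hG' _ _).mpr (by tauto))
            · exact hij rfl
      omega
  · -- sSup B + 1 ≤ sSup A
    by_cases hus : u ∈ s
    · have hvs : v ∉ s := fun hvs => hsind u hus v hvs hne huv
      set t : Finset (V ⊕ Fin 2) := insert (Sum.inr 1) (s.image Sum.inl) with htdef
      have htcard : t.card = s.card + 1 := by
        rw [htdef, Finset.card_insert_of_notMem (by simp),
          Finset.card_image_of_injective _ Sum.inl_injective]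
      have htind : ∀ a ∈ t, ∀ b ∈ t, a ≠ b → ¬ G'.Adj a b := by
        intro a ha b hb hab hadj
        rw [hG'] at hadj
        rcases Finset.mem_insert.mp ha with rfl | ha
        · rcases Finset.mem_insert.mp hb with rfl | hb
          · exact hab rfl
          · obtain ⟨b', hb', rfl⟩ := Finset.mem_image.mp hb
            rcases hadj with ⟨x, y, hx, hy, hadjG, -⟩ | ⟨hx, hy⟩ | ⟨hx, hy⟩ |
              ⟨hx, hy⟩ | ⟨hx, hy⟩ | ⟨hx, hy⟩ | ⟨hx, hy⟩ <;>
              first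
                | (simp at hx; done)
                | (simp at hy; done)
                | exact absurd (Sum.inr.inj hx) (by decide)
                | exact absurd (Sum.inr.inj hy) (by decide)
                | exact hvs (by rwa [Sum.inl.inj hy] at hb')
                | exact hvs (by rwa [Sum.inl.inj hx] at ha')
                | exact hus (by rwa [Sum.inl.inj hy] at hb')
                | exact hus (by rwa [Sum.inl.inj hx] at ha')
                | (obtain rfl := Sum.inl.inj hx
                   obtain rfl := Sum.inl.inj hy
                   exact hsind _ ha' _ hb' (fun h => hab (congrArg _ h)) hadjG)
        · obtain ⟨a', ha', rfl⟩ := Finset.mem_image.mp ha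
          rcases Finset.mem_insert.mp hb with rfl | hb
          · rcases hadj with ⟨x, y, hx, hy, -, -⟩ | ⟨hx, hy⟩ | ⟨hx, hy⟩ |
              ⟨hx, hy⟩ | ⟨hx, hy⟩ | ⟨hx, hy⟩ | ⟨hx, hy⟩ <;>
              first
                | (simp at hx; done)
                | (simp at hy; done)
                | exact absurd (Sum.inr.inj hx) (by decide)
                | exact absurd (Sum.inr.inj hy) (by decide)
                | exact hvs (by rwa [Sum.inl.inj hy] at hb')
                | exact hvs (by rwa [Sum.inl.inj hx] at ha')
                | exact hus (by rwa [Sum.inl.inj hy] at hb')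
                | exact hus (by rwa [Sum.inl.inj hx] at ha')
          · obtain ⟨b', hb', rfl⟩ := Finset.mem_image.mp hb
            rcases hadj with ⟨x, y, hx, hy, hadjG, -⟩ | ⟨hx, hy⟩ | ⟨hx, hy⟩ |
              ⟨hx, hy⟩ | ⟨hx, hy⟩ | ⟨hx, hy⟩ | ⟨hx, hy⟩ <;>
              first
                | (simp at hx; done)
                | (simp at hy; done)
                | exact absurd (Sum.inr.inj hx) (by decide)
                | exact absurd (Sum.inr.inj hy) (by decide)
                | exact hvs (by rwa [Sum.inl.inj hy] at hb')
                | exact hvs (by rwa [Sum.inl.inj hx] at ha')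
                | exact hus (by rwa [Sum.inl.inj hy] at hb')
                | exact hus (by rwa [Sum.inl.inj hx] at ha')
                | (obtain rfl := Sum.inl.inj hx
                   obtain rfl := Sum.inl.inj hy
                   exact hsind _ ha' _ hb' (fun h => hab (congrArg _ h)) hadjG)
      have : s.card + 1 ≤ sSup A := le_csSup hAbdd ⟨t, htcard, htind⟩
      omega
    · set t : Finset (V ⊕ Fin 2) := insert (Sum.inr 0) (s.image Sum.inl) with htdef
      have htcard : t.card = s.card + 1 := by
        rw [htdef, Finset.card_insert_of_notMem (by simp),
          Finset.card_image_of_injective _ Sum.inl_injective]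
      have htind : ∀ a ∈ t, ∀ b ∈ t, a ≠ b → ¬ G'.Adj a b := by
        intro a ha b hb hab hadj
        rw [hG'] at hadj
        rcases Finset.mem_insert.mp ha with rfl | ha
        · rcases Finset.mem_insert.mp hb with rfl | hb
          · exact hab rfl
          · obtain ⟨b', hb', rfl⟩ := Finset.mem_image.mp hb
            rcases hadj with ⟨x, y, hx, hy, hadjG, -⟩ | ⟨hx, hy⟩ | ⟨hx, hy⟩ |
              ⟨hx, hy⟩ | ⟨hx, hy⟩ | ⟨hx, hy⟩ | ⟨hx, hy⟩ <;>
              first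
                | (simp at hx; done)
                | (simp at hy; done)
                | exact absurd (Sum.inr.inj hx) (by decide)
                | exact absurd (Sum.inr.inj hy) (by decide)
                | exact hvs (by rwa [Sum.inl.inj hy] at hb')
                | exact hvs (by rwa [Sum.inl.inj hx] at ha')
                | exact hus (by rwa [Sum.inl.inj hy] at hb')
                | exact hus (by rwa [Sum.inl.inj hx] at ha')
                | (obtain rfl := Sum.inl.inj hx
                   obtain rfl := Sum.inl.inj hy
                   exact hsind _ ha' _ hb' (fun h => hab (congrArg _ h)) hadjG)
        · obtain ⟨a', ha', rfl⟩ := Finset.mem_image.mp ha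
          rcases Finset.mem_insert.mp hb with rfl | hb
          · rcases hadj with ⟨x, y, hx, hy, -, -⟩ | ⟨hx, hy⟩ | ⟨hx, hy⟩ |
              ⟨hx, hy⟩ | ⟨hx, hy⟩ | ⟨hx, hy⟩ | ⟨hx, hy⟩ <;>
              first
                | (simp at hx; done)
                | (simp at hy; done)
                | exact absurd (Sum.inr.inj hx) (by decide)
                | exact absurd (Sum.inr.inj hy) (by decide)
                | exact hvs (by rwa [Sum.inl.inj hy] at hb')
                | exact hvs (by rwa [Sum.inl.inj hx] at ha')
                | exact hus (by rwa [Sum.inl.inj hy] at hb')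
                | exact hus (by rwa [Sum.inl.inj hx] at ha')
          · obtain ⟨b', hb', rfl⟩ := Finset.mem_image.mp hb
            rcases hadj with ⟨x, y, hx, hy, hadjG, -⟩ | ⟨hx, hy⟩ | ⟨hx, hy⟩ |
              ⟨hx, hy⟩ | ⟨hx, hy⟩ | ⟨hx, hy⟩ | ⟨hx, hy⟩ <;>
              first
                | (simp at hx; done)
                | (simp at hy; done)
                | exact absurd (Sum.inr.inj hx) (by decide)
                | exact absurd (Sum.inr.inj hy) (by decide)
                | exact hvs (by rwa [Sum.inl.inj hy] at hb')
                | exact hvs (by rwa [Sum.inl.inj hx] at ha')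
                | exact hus (by rwa [Sum.inl.inj hy] at hb')
                | exact hus (by rwa [Sum.inl.inj hx] at ha')
                | (obtain rfl := Sum.inl.inj hx
                   obtain rfl := Sum.inl.inj hy
                   exact hsind _ ha' _ hb' (fun h => hab (congrArg _ h)) hadjG)
      have : s.card + 1 ≤ sSup A := le_csSup hAbdd ⟨t, htcard, htind⟩
      omega
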